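/- Let P ⊆ S and γ ≥ 0 with 4γ·‖C‖ ≤ 1, where ‖C‖ is the operator norm (largest eigenvalue) of C. Then ∫_{ℝ^S} exp(γ·Σ_{x∈P} A_x²) dμ_C(A) ≤ exp(2γ·Σ_{x∈P} C_{xx}). -/

import Mathlib

open MeasureTheory Matrix

set_option maxHeartbeats 1000000 in
private lemma gem_aux_exp_bound {t : ℝ} (h0 : 0 ≤ t) (h1 : t ≤ 1/2) :
    Real.exp (-(2*t)) ≤ 1 - t := by
  have h2 : 2*t + 1 ≤ Real.exp (2*t) := by simpa using Real.add_one_le_exp (2*t)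
  have h3 : Real.exp (-(2*t)) * Real.exp (2*t) = 1 := by
    rw [← Real.exp_add]; simp
  have h4 : 0 < Real.exp (-(2*t)) := Real.exp_pos _
  nlinarith [Real.exp_pos (2*t)]

set_option maxHeartbeats 1000000 in
set_option synthInstance.maxHeartbeats 400000 in
private lemma gem_eig_le {S : Type*} [Fintype S] [DecidableEq S] (N : Matrix S S ℝ)
    (hN : N.IsHermitian) (i : S) :
    |hN.eigenvalues i| ≤ ‖Matrix.toEuclideanCLM (𝕜 := ℝ) N‖ := by
  set T := Matrix.toEuclideanCLM (𝕜 := ℝ) N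
  set v := hN.eigenvectorBasis i
  have hv1 : ‖v‖ = 1 := hN.eigenvectorBasis.orthonormal.1 i
  have hTv : T v = hN.eigenvalues i • v := by
    apply (WithLp.equiv 2 (S → ℝ)).injective
    simp only [T, WithLp.equiv_apply, Matrix.ofLp_toEuclideanCLM, Matrix.toLin'_apply]
    rw [WithLp.ofLp_smul]
    exact hN.mulVec_eigenvectorBasis i
  have := T.le_opNorm v
  rw [hTv, norm_smul, hv1, mul_one, mul_one] at this
  rwa [Real.norm_eq_abs] at this

set_option maxHeartbeats 1000000 in
set_option synthInstance.maxHeartbeats 400000 in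
private lemma gem_quad_eq {S : Type*} [Fintype S] [DecidableEq S] (M : Matrix S S ℝ)
    (b : OrthonormalBasis S ℝ (EuclideanSpace ℝ S)) (μ : S → ℝ)
    (hb : ∀ i, M *ᵥ (WithLp.equiv 2 (S → ℝ)) (b i) = μ i • (WithLp.equiv 2 (S → ℝ)) (b i))
    (x : EuclideanSpace ℝ S) :
    (WithLp.equiv 2 (S → ℝ)) x ⬝ᵥ M *ᵥ (WithLp.equiv 2 (S → ℝ)) x
      = ∑ i, μ i * (b.repr x i)^2 := by
  set T := Matrix.toEuclideanCLM (𝕜 := ℝ) M with hT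
  have hTb : ∀ i, T (b i) = μ i • b i := by
    intro i
    apply (WithLp.equiv 2 (S → ℝ)).injective
    simp only [hT, WithLp.equiv_apply, Matrix.ofLp_toEuclideanCLM, Matrix.toLin'_apply, WithLp.ofLp_smul]
    exact hb i
  have key : (WithLp.equiv 2 (S → ℝ)) x ⬝ᵥ M *ᵥ (WithLp.equiv 2 (S → ℝ)) x
      = inner ℝ x (T x) := by
    rw [real_inner_comm]
    have : T x = (WithLp.equiv 2 (S → ℝ)).symm (M *ᵥ (WithLp.equiv 2 (S → ℝ)) x) := by
      apply (WithLp.equiv 2 (S → ℝ)).injective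
      simp [hT, Matrix.ofLp_toEuclideanCLM, Matrix.toLin'_apply]
    rw [this]
    simp [EuclideanSpace.inner_eq_star_dotProduct, dotProduct, mul_comm]
  rw [key]
  conv_lhs => rw [← b.sum_repr x]
  rw [map_sum]
  simp_rw [_root_.map_smul, hTb]
  rw [inner_sum]
  refine Finset.sum_congr rfl fun j _ => ?_
  rw [real_inner_smul_right, real_inner_smul_right, real_inner_comm, ← b.repr_apply_apply,
    b.sum_repr]
  ring

set_option maxHeartbeats 1000000 in
set_option synthInstance.maxHeartbeats 400000 in
private lemma gem_gaussian_int {S : Type*} [Fintype S] [DecidableEq S] (M : Matrix S S ℝ)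
    (b : OrthonormalBasis S ℝ (EuclideanSpace ℝ S)) (μ : S → ℝ)
    (hb : ∀ i, M *ᵥ (WithLp.equiv 2 (S → ℝ)) (b i) = μ i • (WithLp.equiv 2 (S → ℝ)) (b i)) :
    ∫ A : S → ℝ, Real.exp (-(1/2) * (A ⬝ᵥ M *ᵥ A))
      = ∏ i, Real.sqrt (2 * Real.pi / μ i) := by
  have step1 : ∫ A : S → ℝ, Real.exp (-(1/2) * (A ⬝ᵥ M *ᵥ A))
      = ∫ x : EuclideanSpace ℝ S, Real.exp (-(1/2) * (∑ i, μ i * (b.repr x i)^2)) := by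
    rw [← (EuclideanSpace.volume_preserving_symm_measurableEquiv_toLp S).integral_comp']
    congr 1
    funext x
    rw [← gem_quad_eq M b μ hb x]
    rfl
  have step2 : ∫ x : EuclideanSpace ℝ S, Real.exp (-(1/2) * (∑ i, μ i * (b.repr x i)^2))
      = ∫ y : EuclideanSpace ℝ S, Real.exp (-(1/2) * (∑ i, μ i * (y i)^2)) := by
    exact b.measurePreserving_measurableEquiv.integral_comp'
      (fun y => Real.exp (-(1/2) * (∑ i, μ i * (y i)^2)))
  have step3 : ∫ y : EuclideanSpace ℝ S, Real.exp (-(1/2) * (∑ i, μ i * (y i)^2))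
      = ∫ u : S → ℝ, Real.exp (-(1/2) * (∑ i, μ i * (u i)^2)) := by
    exact (((EuclideanSpace.volume_preserving_symm_measurableEquiv_toLp S).symm _).integral_comp'
      (fun y => Real.exp (-(1/2) * (∑ i, μ i * (y i)^2)))).symm
  have step4 : ∫ u : S → ℝ, Real.exp (-(1/2) * (∑ i, μ i * (u i)^2))
      = ∏ i, ∫ t : ℝ, Real.exp (-(μ i / 2) * t^2) := by
    rw [← MeasureTheory.integral_fintype_prod_eq_prod (ι := S) (fun i t => Real.exp (-(μ i / 2) * t^2))]
    congr 1
    funext u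
    rw [← Real.exp_sum]
    congr 1
    rw [Finset.mul_sum]
    exact Finset.sum_congr rfl fun i _ => by ring
  rw [step1, step2, step3, step4]
  refine Finset.prod_congr rfl fun i _ => ?_
  rw [integral_gaussian, div_div_eq_mul_div, mul_comm]

set_option maxHeartbeats 1000000 in
set_option synthInstance.maxHeartbeats 400000 in
private lemma gem_trace_eq_sum_eig {S : Type*} [Fintype S] [DecidableEq S] (N : Matrix S S ℝ)
    (hN : N.IsHermitian) : N.trace = ∑ i, hN.eigenvalues i := by
  conv_lhs => rw [hN.spectral_theorem, Unitary.conjStarAlgAut_apply]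
  rw [Matrix.trace_mul_cycle]
  have h : star (hN.eigenvectorUnitary : Matrix S S ℝ) * (hN.eigenvectorUnitary : Matrix S S ℝ)
      = 1 := (Matrix.mem_unitaryGroup_iff').mp hN.eigenvectorUnitary.2
  rw [Unitary.coe_star_mul_self, Matrix.one_mul, Matrix.trace_diagonal]
  simp

set_option maxHeartbeats 1000000 in
set_option synthInstance.maxHeartbeats 400000 in
private lemma gem_det_one_sub_eq {S : Type*} [Fintype S] [DecidableEq S] (N : Matrix S S ℝ)
    (hN : N.IsHermitian) : (1 - N).det = ∏ i, (1 - hN.eigenvalues i) := by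
  set V := (hN.eigenvectorUnitary : Matrix S S ℝ)
  have hVV : V * star V = 1 := (Matrix.mem_unitaryGroup_iff).mp hN.eigenvectorUnitary.2
  have h1 : (1 : Matrix S S ℝ) - N
      = V * (1 - Matrix.diagonal (RCLike.ofReal ∘ hN.eigenvalues)) * star V := by
    rw [Matrix.mul_sub, Matrix.mul_one, Matrix.sub_mul, hVV]
    congr 1
    exact hN.spectral_theorem
  rw [h1, Matrix.det_mul, Matrix.det_mul]
  have hdetV : V.det * (star V).det = 1 := by
    rw [← Matrix.det_mul, hVV, Matrix.det_one]
  have h2 : ((1 : Matrix S S ℝ) - Matrix.diagonal (RCLike.ofReal ∘ hN.eigenvalues)).det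
      = ∏ i, (1 - hN.eigenvalues i) := by
    have hd : (1 : Matrix S S ℝ) - Matrix.diagonal (RCLike.ofReal ∘ hN.eigenvalues)
        = Matrix.diagonal (fun i => 1 - hN.eigenvalues i) := by
      ext i j
      by_cases h : i = j <;> simp [Matrix.one_apply, Matrix.diagonal_apply, h]
    rw [hd, Matrix.det_diagonal]
  rw [h2]
  linear_combination (∏ i, (1 - hN.eigenvalues i)) * hdetV

set_option maxHeartbeats 1000000 in
set_option synthInstance.maxHeartbeats 400000 in
private lemma gem_normD_le {S : Type*} [Fintype S] [DecidableEq S] (P : Finset S) :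
    ‖Matrix.toEuclideanCLM (𝕜 := ℝ)
      (Matrix.diagonal (fun x => if x ∈ P then (1:ℝ) else 0))‖ ≤ 1 := by
  refine ContinuousLinearMap.opNorm_le_bound _ zero_le_one fun x => ?_
  rw [one_mul]
  set d : S → ℝ := fun x => if x ∈ P then (1:ℝ) else 0 with hd
  have hx : ∀ i, ‖(Matrix.toEuclideanCLM (𝕜 := ℝ) (Matrix.diagonal d) x) i‖ ≤ ‖x i‖ := by
    intro i
    have : (Matrix.toEuclideanCLM (𝕜 := ℝ) (Matrix.diagonal d) x) i = d i * x i := by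
      have h1 := Matrix.ofLp_toEuclideanCLM (𝕜 := ℝ) (Matrix.diagonal d) x
      have h2 := congrFun (congrArg (fun v => (v : S → ℝ)) h1) i
      simpa [Matrix.toLin'_apply, Matrix.mulVec_diagonal] using h2
    rw [this, hd]
    simp only [Real.norm_eq_abs, abs_mul]
    split <;> simp [abs_nonneg]
  calc ‖Matrix.toEuclideanCLM (𝕜 := ℝ) (Matrix.diagonal d) x‖
      = Real.sqrt (∑ i, ‖(Matrix.toEuclideanCLM (𝕜 := ℝ) (Matrix.diagonal d) x) i‖^2) := by
        rw [EuclideanSpace.norm_eq]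
    _ ≤ Real.sqrt (∑ i, ‖x i‖^2) := by
        apply Real.sqrt_le_sqrt
        exact Finset.sum_le_sum fun i _ => by
          have := hx i
          nlinarith [norm_nonneg ((Matrix.toEuclideanCLM (𝕜 := ℝ) (Matrix.diagonal d) x) i),
            norm_nonneg (x i)]
    _ = ‖x‖ := (EuclideanSpace.norm_eq x).symm

set_option maxHeartbeats 1000000 in
set_option synthInstance.maxHeartbeats 400000 in
private lemma gem_det_bound {S : Type*} [Fintype S] [Nonempty S] [DecidableEq S]
    (C : Matrix S S ℝ) (hC : C.PosDef) (P : Finset S) (γ : ℝ) (hγ : 0 ≤ γ)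
    (hnorm : 4 * γ * ‖Matrix.toEuclideanCLM (𝕜 := ℝ) C‖ ≤ 1) :
    Real.exp (-(4 * γ * ∑ x ∈ P, C x x))
      ≤ C.det * (C⁻¹ - (2*γ) • Matrix.diagonal (fun x => if x ∈ P then (1:ℝ) else 0)).det := by
  set d : S → ℝ := fun x => if x ∈ P then (1:ℝ) else 0 with hd
  set D := Matrix.diagonal d with hD
  set M := C⁻¹ - (2*γ) • D with hM
  set N := (2*γ) • (D * (C * D)) with hN
  have hdet : IsUnit C.det := (Matrix.isUnit_iff_isUnit_det C).mp hC.isUnit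
  have hDD : D * D = D := by
    have hdd : (fun i => d i * d i) = d := funext fun i => by
      simp only [hd]; split <;> ring
    rw [hD, Matrix.diagonal_mul_diagonal, hdd]
  -- step: C * M = 1 - 2γ C D
  have h1 : C * M = 1 - (2*γ) • (C * D) := by
    rw [hM, Matrix.mul_sub, Matrix.mul_nonsing_inv C hdet, Matrix.mul_smul]
  -- Sylvester
  have h2 : (1 - (2*γ) • (C * D)).det = (1 - N).det := by
    have e1 : (1 : Matrix S S ℝ) - (2*γ) • (C * D)
        = 1 + ((-(2*γ)) • (C * D)) * D := by
      rw [Matrix.smul_mul, Matrix.mul_assoc, hDD, neg_smul, ← sub_eq_add_neg]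
    have e2 : (1 : Matrix S S ℝ) + D * ((-(2*γ)) • (C * D)) = 1 - N := by
      rw [Matrix.mul_smul, neg_smul, ← sub_eq_add_neg, hN]
    rw [e1, Matrix.det_one_add_mul_comm, e2]
  -- N is PSD
  have hNpsd : N.PosSemidef := by
    have psd1 : (Dᴴ * C * D).PosSemidef := hC.posSemidef.conjTranspose_mul_mul_same D
    have hDh : Dᴴ = D := (Matrix.isHermitian_diagonal d).eq
    rw [hDh, Matrix.mul_assoc] at psd1
    refine Matrix.PosSemidef.of_dotProduct_mulVec_nonneg ?_ ?_
    · rw [Matrix.IsHermitian, hN, Matrix.conjTranspose_smul, psd1.1.eq, star_trivial]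
    · intro x
      rw [hN, Matrix.smul_mulVec, dotProduct_smul, smul_eq_mul]
      exact mul_nonneg (by linarith) (psd1.dotProduct_mulVec_nonneg x)
  set ν := hNpsd.1.eigenvalues with hν
  have hν0 : ∀ i, 0 ≤ ν i := hNpsd.eigenvalues_nonneg
  -- eigenvalues ≤ 1/2
  have hνhalf : ∀ i, ν i ≤ 1/2 := by
    intro i
    have h3 := gem_eig_le N hNpsd.1 i
    have hTN : ‖Matrix.toEuclideanCLM (𝕜 := ℝ) N‖ ≤ 1/2 := by
      have e3 : Matrix.toEuclideanCLM (𝕜 := ℝ) N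
          = (2*γ) • (Matrix.toEuclideanCLM (𝕜 := ℝ) D
              * (Matrix.toEuclideanCLM (𝕜 := ℝ) C * Matrix.toEuclideanCLM (𝕜 := ℝ) D)) := by
        rw [hN, _root_.map_smul, _root_.map_mul, _root_.map_mul]
      refine ContinuousLinearMap.opNorm_le_bound _ (by norm_num) fun x => ?_
      rw [e3, ContinuousLinearMap.smul_apply, ContinuousLinearMap.mul_apply,
        ContinuousLinearMap.mul_apply, norm_smul, Real.norm_eq_abs,
        abs_of_nonneg (show (0:ℝ) ≤ 2*γ by linarith)]
      set TD := Matrix.toEuclideanCLM (𝕜 := ℝ) D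
      set TC := Matrix.toEuclideanCLM (𝕜 := ℝ) C
      have hD1 : ‖TD‖ ≤ 1 := gem_normD_le P
      have hb1 : ‖TD (TC (TD x))‖ ≤ 1 * ‖TC (TD x)‖ :=
        le_trans (TD.le_opNorm _) (mul_le_mul_of_nonneg_right hD1 (norm_nonneg _))
      have hb2 : ‖TC (TD x)‖ ≤ ‖TC‖ * ‖TD x‖ := TC.le_opNorm _
      have hb3 : ‖TD x‖ ≤ 1 * ‖x‖ :=
        le_trans (TD.le_opNorm _) (mul_le_mul_of_nonneg_right hD1 (norm_nonneg _))
      have hC0 : (0:ℝ) ≤ ‖TC‖ := norm_nonneg _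
      have hx0 : (0:ℝ) ≤ ‖x‖ := norm_nonneg _
      have hn0 : (0:ℝ) ≤ ‖TC (TD x)‖ := norm_nonneg _
      have hn1 : (0:ℝ) ≤ ‖TD x‖ := norm_nonneg _
      nlinarith
    calc ν i ≤ |ν i| := le_abs_self _
      _ ≤ 1/2 := le_trans h3 hTN
  -- trace of N
  have htr : ∑ i, ν i = 2 * γ * ∑ x ∈ P, C x x := by
    rw [hν, ← gem_trace_eq_sum_eig N hNpsd.1, hN, Matrix.trace_smul, Matrix.trace, smul_eq_mul]
    congr 1
    simp only [Matrix.diag_apply, hD, Matrix.diagonal_mul, Matrix.mul_diagonal, hd]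
    have he : ∀ i, (if i ∈ P then (1:ℝ) else 0) * (C i i * (if i ∈ P then (1:ℝ) else 0))
        = if i ∈ P then C i i else 0 := fun i => by split <;> ring
    rw [Finset.sum_congr rfl fun i _ => he i, Finset.sum_ite_mem, Finset.univ_inter]
  -- final chain
  have hfin : Real.exp (-(2 * ∑ i, ν i)) ≤ (1 - N).det := by
    rw [gem_det_one_sub_eq N hNpsd.1, ← hν]
    have : Real.exp (-(2 * ∑ i, ν i)) = ∏ i, Real.exp (-(2 * ν i)) := by
      rw [← Real.exp_sum]
      congr 1
      rw [Finset.mul_sum, ← Finset.sum_neg_distrib]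
    rw [this]
    exact Finset.prod_le_prod (fun i _ => (Real.exp_pos _).le)
      (fun i _ => gem_aux_exp_bound (hν0 i) (hνhalf i))
  have : C.det * M.det = (1 - N).det := by
    rw [← Matrix.det_mul, h1, h2]
  rw [this]
  calc Real.exp (-(4 * γ * ∑ x ∈ P, C x x)) = Real.exp (-(2 * ∑ i, ν i)) := by
        rw [htr]; ring_nf
    _ ≤ (1 - N).det := hfin

set_option maxHeartbeats 1000000 in
set_option synthInstance.maxHeartbeats 400000 in
private lemma gem_M_posdef {S : Type*} [Fintype S] [Nonempty S] [DecidableEq S]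
    (C : Matrix S S ℝ) (hC : C.PosDef) (P : Finset S) (γ : ℝ) (hγ : 0 ≤ γ)
    (hnorm : 4 * γ * ‖Matrix.toEuclideanCLM (𝕜 := ℝ) C‖ ≤ 1) :
    (C⁻¹ - (2*γ) • Matrix.diagonal (fun x => if x ∈ P then (1:ℝ) else 0)).PosDef := by
  set d : S → ℝ := fun x => if x ∈ P then (1:ℝ) else 0 with hd
  set D := Matrix.diagonal d with hD
  set nrm := ‖Matrix.toEuclideanCLM (𝕜 := ℝ) C‖ with hnrm
  set b := hC.1.eigenvectorBasis with hb
  set lam := hC.1.eigenvalues with hlam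
  have hlam_pos : ∀ i, 0 < lam i := hC.eigenvalues_pos
  have hlam_le : ∀ i, lam i ≤ nrm := fun i => le_trans (le_abs_self _) (gem_eig_le C hC.1 i)
  have hnrm_pos : 0 < nrm := lt_of_lt_of_le (hlam_pos (Classical.arbitrary S)) (hlam_le _)
  have hdet : IsUnit C.det := (Matrix.isUnit_iff_isUnit_det C).mp hC.isUnit
  -- eigenvectors of C⁻¹
  have hCinv_vec : ∀ i, C⁻¹ *ᵥ (WithLp.equiv 2 (S → ℝ)) (b i)
      = (lam i)⁻¹ • (WithLp.equiv 2 (S → ℝ)) (b i) := by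
    intro i
    set v := (WithLp.equiv 2 (S → ℝ)) (b i)
    have h1 : C *ᵥ v = lam i • v := hC.1.mulVec_eigenvectorBasis i
    have h2 : C⁻¹ *ᵥ (C *ᵥ v) = v := by
      rw [Matrix.mulVec_mulVec, Matrix.nonsing_inv_mul C hdet, Matrix.one_mulVec]
    rw [h1, Matrix.mulVec_smul] at h2
    have := congrArg (fun w => (lam i)⁻¹ • w) h2
    simp only [smul_smul, inv_mul_cancel₀ (hlam_pos i).ne', one_smul] at this
    exact this
  -- hermitian
  have hMh : (C⁻¹ - (2*γ) • D).IsHermitian := by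
    have h1 : (C⁻¹).IsHermitian := hC.1.inv
    have h2 : D.IsHermitian := Matrix.isHermitian_diagonal d
    have h3 : ((2*γ) • D).IsHermitian := by
      rw [Matrix.IsHermitian, Matrix.conjTranspose_smul, h2.eq, star_trivial]
    exact h1.sub h3
  refine Matrix.PosDef.of_dotProduct_mulVec_pos hMh fun x hx => ?_
  rw [star_trivial]
  set y := (WithLp.equiv 2 (S → ℝ)).symm x with hy
  have hxy : (WithLp.equiv 2 (S → ℝ)) y = x := rfl
  set c := fun i => b.repr y i with hc
  have q1 : x ⬝ᵥ C⁻¹ *ᵥ x = ∑ i, (lam i)⁻¹ * (c i)^2 := by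
    rw [← hxy]; exact gem_quad_eq C⁻¹ b (fun i => (lam i)⁻¹) hCinv_vec y
  have q2 : x ⬝ᵥ (1 : Matrix S S ℝ) *ᵥ x = ∑ i, 1 * (c i)^2 := by
    rw [← hxy]
    exact gem_quad_eq 1 b (fun _ => 1) (fun i => by rw [Matrix.one_mulVec, one_smul]) y
  have q2' : ∑ i, (x i)^2 = ∑ i, (c i)^2 := by
    rw [Matrix.one_mulVec, dotProduct] at q2
    simpa [sq] using q2
  have q3 : x ⬝ᵥ D *ᵥ x = ∑ i ∈ P, (x i)^2 := by
    simp only [hD, dotProduct, Matrix.mulVec_diagonal, hd]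
    have he : ∀ i, x i * ((if i ∈ P then (1:ℝ) else 0) * x i)
        = if i ∈ P then x i ^ 2 else 0 := fun i => by split <;> ring
    rw [Finset.sum_congr rfl fun i _ => he i, Finset.sum_ite_mem, Finset.univ_inter]
  have hy0 : y ≠ 0 := by
    intro h
    apply hx
    rw [← hxy, h]
    simp
  have hc0 : ∃ i, c i ≠ 0 := by
    by_contra hcon
    push_neg at hcon
    apply hy0
    apply b.repr.injective
    rw [map_zero]
    ext i
    exact hcon i
  obtain ⟨i0, hi0⟩ := hc0
  have hsum_pos : 0 < ∑ i, c i ^ 2 := by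
    refine Finset.sum_pos' (fun i _ => sq_nonneg _) ⟨i0, Finset.mem_univ _, ?_⟩
    exact pow_pos (abs_pos.mpr hi0) 2 |>.trans_le (by rw [sq_abs])
  have hP_le : ∑ i ∈ P, (x i)^2 ≤ ∑ i, c i ^ 2 := by
    rw [← q2']
    exact Finset.sum_le_sum_of_subset_of_nonneg (Finset.subset_univ P)
      (fun i _ _ => sq_nonneg _)
  have hP_nonneg : 0 ≤ ∑ i ∈ P, (x i)^2 := Finset.sum_nonneg fun i _ => sq_nonneg _
  have hA : nrm⁻¹ * ∑ i, c i ^ 2 ≤ ∑ i, (lam i)⁻¹ * c i ^ 2 := by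
    rw [Finset.mul_sum]
    refine Finset.sum_le_sum fun i _ => ?_
    exact mul_le_mul_of_nonneg_right (inv_anti₀ (hlam_pos i) (hlam_le i)) (sq_nonneg _)
  have hB : 2 * γ * ∑ i ∈ P, (x i)^2 ≤ (1/(2*nrm)) * ∑ i, c i ^ 2 := by
    have h2γ : 2 * γ ≤ 1/(2*nrm) := by
      rw [le_div_iff₀ (by positivity)]
      nlinarith
    exact mul_le_mul h2γ hP_le hP_nonneg (by positivity)
  rw [Matrix.sub_mulVec, dotProduct_sub, Matrix.smul_mulVec,
    dotProduct_smul, q1, q3, smul_eq_mul]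
  have hkey : nrm⁻¹ - 1/(2*nrm) = 1/(2*nrm) := by
    field_simp
    ring
  nlinarith [mul_pos (show (0:ℝ) < 1/(2*nrm) by positivity) hsum_pos]

set_option maxHeartbeats 1000000 in
set_option synthInstance.maxHeartbeats 400000 in
/-- exponential moment bound for a Gaussian measure:
if `4γ‖C‖ ≤ 1` (operator norm = largest eigenvalue of the covariance `C`), then
`∫ e^{γ Σ_{x∈P} A_x²} dμ_C(A) ≤ e^{2γ Σ_{x∈P} C_{xx}}`. -/
theorem gaussian_exponential_moment {S : Type*} [Fintype S] [Nonempty S] [DecidableEq S]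
    (C : Matrix S S ℝ) (hC : C.PosDef) (P : Finset S) (γ : ℝ) (hγ : 0 ≤ γ)
    (hnorm : 4 * γ * ‖Matrix.toEuclideanCLM (𝕜 := ℝ) C‖ ≤ 1) :
    (∫ A : S → ℝ, Real.exp (γ * ∑ x ∈ P, A x ^ 2) *
        ((Real.sqrt (((2 * Real.pi) • C).det))⁻¹ *
          Real.exp (-(1 / 2) * (A ⬝ᵥ C⁻¹.mulVec A)))) ≤
      Real.exp (2 * γ * ∑ x ∈ P, C x x) := by
  set d : S → ℝ := fun x => if x ∈ P then (1:ℝ) else 0 with hd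
  set D := Matrix.diagonal d with hD
  set M := C⁻¹ - (2*γ) • D with hM
  set c₀ := (Real.sqrt (((2 * Real.pi) • C).det))⁻¹ with hc₀
  have hMpd : M.PosDef := gem_M_posdef C hC P γ hγ hnorm
  -- pointwise rewrite of the integrand
  have q3 : ∀ A : S → ℝ, A ⬝ᵥ D *ᵥ A = ∑ x ∈ P, A x ^ 2 := by
    intro A
    simp only [hD, dotProduct, Matrix.mulVec_diagonal, hd]
    have he : ∀ i, A i * ((if i ∈ P then (1:ℝ) else 0) * A i)
        = if i ∈ P then A i ^ 2 else 0 := fun i => by split <;> ring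
    rw [Finset.sum_congr rfl fun i _ => he i, Finset.sum_ite_mem, Finset.univ_inter]
  have dotP : ∀ A : S → ℝ, A ⬝ᵥ M *ᵥ A
      = A ⬝ᵥ C⁻¹ *ᵥ A - 2*γ*(∑ x ∈ P, A x ^ 2) := by
    intro A
    rw [hM, Matrix.sub_mulVec, dotProduct_sub, Matrix.smul_mulVec,
      dotProduct_smul, q3, smul_eq_mul]
  have hpt : ∀ A : S → ℝ, Real.exp (γ * ∑ x ∈ P, A x ^ 2) *
      (c₀ * Real.exp (-(1 / 2) * (A ⬝ᵥ C⁻¹.mulVec A)))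
      = c₀ * Real.exp (-(1/2) * (A ⬝ᵥ M *ᵥ A)) := by
    intro A
    rw [dotP A, mul_left_comm, ← Real.exp_add]
    congr 2
    ring
  rw [show (fun A : S → ℝ => Real.exp (γ * ∑ x ∈ P, A x ^ 2) *
      (c₀ * Real.exp (-(1 / 2) * (A ⬝ᵥ C⁻¹.mulVec A))))
      = fun A : S → ℝ => c₀ * Real.exp (-(1/2) * (A ⬝ᵥ M *ᵥ A)) from funext hpt,
    MeasureTheory.integral_const_mul]
  -- Gaussian integral
  set b := hMpd.1.eigenvectorBasis with hb
  set μ := hMpd.1.eigenvalues with hμ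
  have hbvec : ∀ i, M *ᵥ (WithLp.equiv 2 (S → ℝ)) (b i)
      = μ i • (WithLp.equiv 2 (S → ℝ)) (b i) := by
    intro i
    exact hMpd.1.mulVec_eigenvectorBasis i
  rw [gem_gaussian_int M b μ hbvec]
  have hμpos : ∀ i, 0 < μ i := hMpd.eigenvalues_pos
  have hdetM : M.det = ∏ i, μ i := by
    simpa using hMpd.1.det_eq_prod_eigenvalues
  have hdetCpos : 0 < C.det := hC.det_pos
  have hdetMpos : 0 < M.det := hMpd.det_pos
  have h2π : (0:ℝ) < 2 * Real.pi := by positivity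
  set n := Fintype.card S with hn
  have hsmul : ((2 * Real.pi) • C).det = (2 * Real.pi)^n * C.det := by
    rw [Matrix.det_smul, hn]
  have hprod : ∏ i, Real.sqrt (2 * Real.pi / μ i)
      = Real.sqrt ((2 * Real.pi)^n / M.det) := by
    have h1 : ∀ i ∈ Finset.univ, (0:ℝ) ≤ 2 * Real.pi / μ i := fun i _ => by
      have := hμpos i; positivity
    calc ∏ i, Real.sqrt (2 * Real.pi / μ i)
        = ∏ i, (2 * Real.pi / μ i) ^ ((1:ℝ)/2) := by
          exact Finset.prod_congr rfl fun i _ => Real.sqrt_eq_rpow _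
      _ = (∏ i, (2 * Real.pi / μ i)) ^ ((1:ℝ)/2) := Real.finset_prod_rpow _ _ h1 _
      _ = Real.sqrt (∏ i, (2 * Real.pi / μ i)) := (Real.sqrt_eq_rpow _).symm
      _ = Real.sqrt ((2 * Real.pi)^n / M.det) := by
          rw [Finset.prod_div_distrib, Finset.prod_const, Finset.card_univ, ← hdetM, hn]
  rw [hprod, hc₀, hsmul]
  -- final chain
  have hdb := gem_det_bound C hC P γ hγ hnorm
  rw [← hD, ← hM] at hdb
  have hpown : (0:ℝ) < (2 * Real.pi)^n := by positivity
  have e1 : (Real.sqrt ((2 * Real.pi)^n * C.det))⁻¹ * Real.sqrt ((2 * Real.pi)^n / M.det)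
      = Real.sqrt (1 / (M.det * C.det)) := by
    rw [inv_mul_eq_div, ← Real.sqrt_div (by positivity)]
    congr 1
    field_simp
  rw [e1]
  have h3 : Real.exp (-(4 * γ * ∑ x ∈ P, C x x)) ≤ M.det * C.det := by
    rw [mul_comm C.det M.det] at hdb; exact hdb
  have h4 : 1 / (M.det * C.det) ≤ Real.exp (4 * γ * ∑ x ∈ P, C x x) := by
    have hpos : 0 < Real.exp (-(4 * γ * ∑ x ∈ P, C x x)) := Real.exp_pos _
    have := one_div_le_one_div_of_le hpos h3
    rw [Real.exp_neg] at this
    simpa using this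
  calc Real.sqrt (1 / (M.det * C.det))
      ≤ Real.sqrt (Real.exp (4 * γ * ∑ x ∈ P, C x x)) := Real.sqrt_le_sqrt h4
    _ = Real.exp (2 * γ * ∑ x ∈ P, C x x) := by
        rw [show (4 : ℝ) * γ * ∑ x ∈ P, C x x
            = 2 * γ * ∑ x ∈ P, C x x + 2 * γ * ∑ x ∈ P, C x x by ring,
          Real.exp_add, Real.sqrt_mul_self (Real.exp_pos _).le]
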